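/- Let A be a circular convolution operator on ℓ²(ℤ_d×ℤ_d) with kernel a, let {Λ_k : k = 1,…,N_A} be the level sets of â, let Ω ⊂ ℤ_d×ℤ_d, and let Y = {e_{(j_1,j_2)}, A e_{(j_1,j_2)}, …, A^{l_{(j_1,j_2)}} e_{(j_1,j_2)} : (j_1,j_2) ∈ Ω}. If Y is a frame for ℓ²(ℤ_d×ℤ_d), then for each k the submatrix of F_d ⊗ F_d formed by the rows indexed by Λ_k and the columns indexed by Ω has rank |Λ_k|; consequently |Ω| ≥ max_k |Λ_k|. -/

import Mathlib

open Matrix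

/-- Unnormalized 2D discrete Fourier transform of `a : ℤ_d × ℤ_d → ℂ`. -/
noncomputable def hatKer2 (d : ℕ) [NeZero d] (a : ZMod d × ZMod d → ℂ) :
    ZMod d × ZMod d → ℂ :=
  fun j => ∑ k : ZMod d × ZMod d,
    a k * Complex.exp (-(2 * (Real.pi : ℂ) * Complex.I) *
      ((j.1.val : ℂ) * (k.1.val : ℂ) + (j.2.val : ℂ) * (k.2.val : ℂ)) / (d : ℂ))

/-- The 2D circular convolution operator with kernel `a`, as a matrix. -/
def convMat2 (d : ℕ) (a : ZMod d × ZMod d → ℂ) :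
    Matrix (ZMod d × ZMod d) (ZMod d × ZMod d) ℂ :=
  Matrix.of fun k i => a (k - i)

/-- The Kronecker product `F_d ⊗ F_d`: its entry at `((i₁,i₂),(j₁,j₂))` is
`(1/d) ω_d^{i₁j₁ + i₂j₂}`. -/
noncomputable def F2Mat (d : ℕ) : Matrix (ZMod d × ZMod d) (ZMod d × ZMod d) ℂ :=
  Matrix.of fun i j => ((d : ℂ))⁻¹ * Complex.exp (-(2 * (Real.pi : ℂ) * Complex.I) *
    ((i.1.val : ℂ) * (j.1.val : ℂ) + (i.2.val : ℂ) * (j.2.val : ℂ)) / (d : ℂ))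


noncomputable def wroot (d : ℕ) : ℂ := Complex.exp (-(2 * (Real.pi : ℂ) * Complex.I) / d)

lemma wroot_pow (d : ℕ) (n : ℕ) :
    Complex.exp (-(2 * (Real.pi : ℂ) * Complex.I) * n / d) = wroot d ^ n := by
  rw [show -(2 * (Real.pi : ℂ) * Complex.I) * n / d
      = n * (-(2 * (Real.pi : ℂ) * Complex.I) / d) by ring, Complex.exp_nat_mul, wroot]

lemma wroot_pow_d (d : ℕ) [NeZero d] : wroot d ^ d = 1 := by
  have hd : (d : ℂ) ≠ 0 := Nat.cast_ne_zero.mpr (NeZero.ne d)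
  rw [wroot, ← Complex.exp_nat_mul]
  rw [show (d : ℂ) * (-(2 * (Real.pi : ℂ) * Complex.I) / d)
      = ((-1 : ℤ) : ℂ) * (2 * Real.pi * Complex.I) by field_simp; ring]
  exact Complex.exp_int_mul_two_pi_mul_I (-1)

lemma wroot_congr (d : ℕ) [NeZero d] {x y : ℕ} (h : x ≡ y [MOD d]) :
    wroot d ^ x = wroot d ^ y := by
  have key : ∀ n : ℕ, wroot d ^ n = wroot d ^ (n % d) := by
    intro n
    conv_lhs => rw [← Nat.div_add_mod n d]
    rw [pow_add, pow_mul, wroot_pow_d, one_pow, one_mul]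
  rw [key x, key y, h]

lemma exp2_eq (d : ℕ) (x y z t : ℕ) :
    Complex.exp (-(2 * (Real.pi : ℂ) * Complex.I) *
      ((x : ℂ) * (y : ℂ) + (z : ℂ) * (t : ℂ)) / (d : ℂ)) = wroot d ^ (x * y + z * t) := by
  rw [← wroot_pow]
  congr 1
  push_cast
  ring

lemma hatKer2_eq (d : ℕ) [NeZero d] (a : ZMod d × ZMod d → ℂ) (j : ZMod d × ZMod d) :
    hatKer2 d a j = ∑ k : ZMod d × ZMod d,
      a k * wroot d ^ (j.1.val * k.1.val + j.2.val * k.2.val) := by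
  unfold hatKer2
  exact Finset.sum_congr rfl fun k _ => by rw [exp2_eq]

lemma F2Mat_eq (d : ℕ) (i j : ZMod d × ZMod d) :
    F2Mat d i j = ((d : ℂ))⁻¹ * wroot d ^ (i.1.val * j.1.val + i.2.val * j.2.val) := by
  show ((d : ℂ))⁻¹ * _ = _
  rw [exp2_eq]

lemma key_comm (d : ℕ) [NeZero d] (a : ZMod d × ZMod d → ℂ) :
    F2Mat d * convMat2 d a = Matrix.diagonal (hatKer2 d a) * F2Mat d := by
  ext i k
  rw [Matrix.diagonal_mul, Matrix.mul_apply]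
  show _ = hatKer2 d a i * F2Mat d i k
  rw [hatKer2_eq, F2Mat_eq, Finset.sum_mul]
  rw [← Equiv.sum_comp (Equiv.addRight k) (fun j => F2Mat d i j * convMat2 d a j k)]
  refine Finset.sum_congr rfl fun m _ => ?_
  have hm : (Equiv.addRight k) m = m + k := rfl
  rw [hm, F2Mat_eq]
  show ((d:ℂ))⁻¹ * wroot d ^ (i.1.val * ((m+k).1.val) + i.2.val * ((m+k).2.val)) * a ((m + k) - k) = _
  rw [add_sub_cancel_right]
  have h1 : i.1.val * ((m+k).1.val) + i.2.val * ((m+k).2.val)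
      ≡ (i.1.val * m.1.val + i.2.val * m.2.val) + (i.1.val * k.1.val + i.2.val * k.2.val) [MOD d] := by
    have e1 : (m.1 + k.1).val ≡ m.1.val + k.1.val [MOD d] := by
      rw [ZMod.val_add]; exact Nat.mod_modEq _ d
    have e2 : (m.2 + k.2).val ≡ m.2.val + k.2.val [MOD d] := by
      rw [ZMod.val_add]; exact Nat.mod_modEq _ d
    calc i.1.val * ((m+k).1.val) + i.2.val * ((m+k).2.val)
        ≡ i.1.val * (m.1.val + k.1.val) + i.2.val * (m.2.val + k.2.val) [MOD d] :=
          Nat.ModEq.add (e1.mul_left _) (e2.mul_left _)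
      _ = (i.1.val * m.1.val + i.2.val * m.2.val) + (i.1.val * k.1.val + i.2.val * k.2.val) := by ring
  rw [wroot_congr d h1, pow_add]
  ring

noncomputable def Gmat (d : ℕ) : Matrix (ZMod d) (ZMod d) ℂ :=
  Matrix.of fun i j => wroot d ^ (i.val * j.val)

def zmodFinEquiv (d : ℕ) [NeZero d] : ZMod d ≃ Fin d where
  toFun x := ⟨x.val, ZMod.val_lt x⟩
  invFun i := (i : ℕ)
  left_inv x := ZMod.natCast_rightInverse x
  right_inv i := by ext; exact ZMod.val_cast_of_lt i.isLt

lemma wroot_primitive (d : ℕ) [NeZero d] : IsPrimitiveRoot (wroot d) d := by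
  have h := Complex.isPrimitiveRoot_exp d (NeZero.ne d)
  have : wroot d = (Complex.exp (2 * Real.pi * Complex.I / d))⁻¹ := by
    rw [wroot, ← Complex.exp_neg]; congr 1; ring
  rw [this]
  exact h.inv

lemma det_Gmat_ne_zero (d : ℕ) [NeZero d] : (Gmat d).det ≠ 0 := by
  have : (Gmat d).det = (Matrix.vandermonde (fun i : Fin d => wroot d ^ (i : ℕ))).det := by
    rw [← Matrix.det_reindex_self (zmodFinEquiv d) (Gmat d)]
    congr 1
    ext i j
    simp only [Matrix.reindex_apply, Matrix.submatrix_apply, Matrix.vandermonde, Gmat,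
      Matrix.of_apply]
    have hv : ∀ i : Fin d, ((zmodFinEquiv d).symm i).val = (i : ℕ) := fun i =>
      ZMod.val_cast_of_lt i.isLt
    rw [hv, hv, ← pow_mul]
  rw [this]
  refine Matrix.det_vandermonde_ne_zero_iff.mpr ?_
  intro i j h
  exact Fin.ext ((wroot_primitive d).pow_inj i.isLt j.isLt h)

lemma F2Mat_kron (d : ℕ) [NeZero d] :
    F2Mat d = Matrix.kroneckerMap (· * ·) (((d : ℂ))⁻¹ • Gmat d) (Gmat d) := by
  ext i j
  rw [F2Mat_eq]
  simp only [Matrix.kroneckerMap_apply, Matrix.smul_apply, Gmat, Matrix.of_apply, smul_eq_mul]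
  rw [pow_add]
  ring

lemma det_F2Mat_ne_zero (d : ℕ) [NeZero d] : (F2Mat d).det ≠ 0 := by
  rw [F2Mat_kron]
  rw [Matrix.det_kronecker]
  have hd : ((d : ℂ))⁻¹ ≠ 0 := inv_ne_zero (Nat.cast_ne_zero.mpr (NeZero.ne d))
  have h1 : (((d : ℂ))⁻¹ • Gmat d).det ≠ 0 := by
    rw [Matrix.det_smul]
    simp only [Fintype.card_fin, ZMod.card]
    exact mul_ne_zero (pow_ne_zero _ hd) (det_Gmat_ne_zero d)
  exact mul_ne_zero (pow_ne_zero _ h1) (pow_ne_zero _ (det_Gmat_ne_zero d))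

lemma F2Mat_mulVec_surjective (d : ℕ) [NeZero d] :
    Function.Surjective (fun v => (F2Mat d).mulVec v) := by
  intro u
  have hdet : IsUnit (F2Mat d).det := (det_F2Mat_ne_zero d).isUnit
  refine ⟨(F2Mat d)⁻¹ *ᵥ u, ?_⟩
  show F2Mat d *ᵥ ((F2Mat d)⁻¹ *ᵥ u) = u
  rw [Matrix.mulVec_mulVec, Matrix.mul_nonsing_inv _ hdet, Matrix.one_mulVec]

lemma key_comm_pow (d : ℕ) [NeZero d] (a : ZMod d × ZMod d → ℂ) (n : ℕ) :
    F2Mat d * (convMat2 d a) ^ n = (Matrix.diagonal (hatKer2 d a)) ^ n * F2Mat d := by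
  induction n with
  | zero => simp
  | succ n ih =>
    rw [pow_succ, pow_succ, ← Matrix.mul_assoc, ih, Matrix.mul_assoc, key_comm,
      ← Matrix.mul_assoc]

/-- if `Y = {A^n e_j : j ∈ Ω, n ≤ l j}` is a frame for `ℓ²(ℤ_d × ℤ_d)`,
then for each value `c` of `â` the submatrix of `F_d ⊗ F_d` with rows indexed by the
level set `Λ = {j : â j = c}` and columns indexed by `Ω` has rank `|Λ|`, and
consequently `|Ω| ≥ |Λ|` for every level set `Λ`. -/
theorem stmt12 (d : ℕ) [NeZero d] (a : ZMod d × ZMod d → ℂ)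
    (Ω : Finset (ZMod d × ZMod d)) (l : ZMod d × ZMod d → ℕ)
    (hY : Submodule.span ℂ {v : ZMod d × ZMod d → ℂ | ∃ j ∈ Ω, ∃ n ≤ l j,
        v = (convMat2 d a) ^ n *ᵥ (Pi.single j 1 : ZMod d × ZMod d → ℂ)} = ⊤) :
    ∀ c ∈ Set.range (hatKer2 d a),
      (Matrix.rank (Matrix.of
          fun (r : {j : ZMod d × ZMod d // hatKer2 d a j = c}) (q : ↥Ω) =>
            F2Mat d r.1 q.1)
        = Nat.card {j : ZMod d × ZMod d | hatKer2 d a j = c}) ∧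
      Nat.card {j : ZMod d × ZMod d | hatKer2 d a j = c} ≤ Ω.card := by
  classical
  intro c hc
  set Msub : Matrix {j : ZMod d × ZMod d // hatKer2 d a j = c} ↥Ω ℂ :=
    Matrix.of (fun r q => F2Mat d r.1 q.1) with hMsub
  let L : (ZMod d × ZMod d → ℂ) →ₗ[ℂ] ({j : ZMod d × ZMod d // hatKer2 d a j = c} → ℂ) :=
    (LinearMap.funLeft ℂ ℂ Subtype.val).comp (Matrix.mulVecLin (F2Mat d))
  have hLsurj : Function.Surjective L :=
    (LinearMap.funLeft_surjective_of_injective ℂ ℂ _ Subtype.val_injective).comp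
      (F2Mat_mulVec_surjective d)
  have himg : ∀ v ∈ {v : ZMod d × ZMod d → ℂ | ∃ j ∈ Ω, ∃ n ≤ l j,
      v = (convMat2 d a) ^ n *ᵥ (Pi.single j 1 : ZMod d × ZMod d → ℂ)},
      L v ∈ Submodule.span ℂ (Set.range Msubᵀ) := by
    rintro v ⟨j, hj, n, hn, rfl⟩
    have hv : L ((convMat2 d a) ^ n *ᵥ (Pi.single j 1 : ZMod d × ZMod d → ℂ))
        = c ^ n • Msubᵀ ⟨j, hj⟩ := by
      funext r
      show (F2Mat d *ᵥ ((convMat2 d a) ^ n *ᵥ Pi.single j 1)) r.1 = _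
      rw [Matrix.mulVec_mulVec, key_comm_pow, Matrix.diagonal_pow, ← Matrix.mulVec_mulVec,
        Matrix.mulVec_diagonal]
      simp only [Matrix.mulVec_single, mul_one, Pi.pow_apply, Pi.smul_apply,
        Matrix.transpose_apply, smul_eq_mul]
      rw [r.2]
      simp only [MulOpposite.op_one, one_smul]
      rfl
    rw [hv]
    exact Submodule.smul_mem _ _ (Submodule.subset_span ⟨⟨j, hj⟩, rfl⟩)
  have hspan : Submodule.span ℂ (Set.range Msubᵀ) = ⊤ := by
    rw [eq_top_iff]
    have htop : Submodule.map L ⊤ = ⊤ := by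
      rw [Submodule.map_top, LinearMap.range_eq_top.mpr hLsurj]
    rw [← htop, ← hY, Submodule.map_span]
    exact Submodule.span_le.mpr (by rintro _ ⟨v, hv, rfl⟩; exact himg v hv)
  have hrank : Msub.rank = Nat.card {j : ZMod d × ZMod d | hatKer2 d a j = c} := by
    rw [Matrix.rank, Matrix.range_mulVecLin,
      (show Submodule.span ℂ (Set.range Msub.col) = ⊤ from hspan), finrank_top,
      Module.finrank_fintype_fun_eq_card]
    exact (Nat.card_eq_fintype_card).symm
  refine ⟨hrank, ?_⟩
  calc Nat.card {j : ZMod d × ZMod d | hatKer2 d a j = c} = Msub.rank := hrank.symm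
    _ ≤ Fintype.card ↥Ω := Msub.rank_le_card_width
    _ = Ω.card := Fintype.card_coe Ω
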